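/- Matching of the integer-order solutions at the compartment boundary: let q > 0, L > 0, σ ∈ ℝ, and define c_p(r) = σ/q − (σL/√q)·K₁(√q·L)·I₀(√q·r) and c_d(r) = (σL/√q)·I₁(√q·L)·K₀(√q·r) for r > 0. Then c_p(L) = c_d(L) and c_p'(L) = c_d'(L). -/

import Mathlib

open Real MeasureTheory Set Filter Topology

/-- The modified Bessel function of the first kind of order zero,
`I₀(x) = (1/π) ∫₀^π exp (x cos θ) dθ`. -/
noncomputable def I0 (x : ℝ) : ℝ := (1 / π) * ∫ θ in (0:ℝ)..π, Real.exp (x * Real.cos θ)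

/-- The modified Bessel function of the first kind of order one,
`I₁(x) = (1/π) ∫₀^π exp (x cos θ) cos θ dθ`. -/
noncomputable def I1 (x : ℝ) : ℝ :=
  (1 / π) * ∫ θ in (0:ℝ)..π, Real.exp (x * Real.cos θ) * Real.cos θ

/-- The modified Bessel function of the second kind of order zero,
`K₀(x) = ∫₀^∞ exp (−x cosh t) dt`. -/
noncomputable def K0 (x : ℝ) : ℝ := ∫ t in Ioi (0:ℝ), Real.exp (-x * Real.cosh t)

/-- The modified Bessel function of the second kind of order one,
`K₁(x) = ∫₀^∞ exp (−x cosh t) cosh t dt`. -/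
noncomputable def K1 (x : ℝ) : ℝ :=
  ∫ t in Ioi (0:ℝ), Real.exp (-x * Real.cosh t) * Real.cosh t

-- basic bound: for t ≥ 0, t ≤ cosh t
lemma le_cosh_self {t : ℝ} (ht : 0 ≤ t) : t ≤ Real.cosh t :=
  le_trans (Real.self_le_sinh_iff.2 ht) (Real.sinh_lt_cosh t).le

lemma exp_cosh_le {x t : ℝ} (hx : 0 ≤ x) (ht : 0 ≤ t) :
    Real.exp (-x * Real.cosh t) ≤ Real.exp (-x * t) := by
  apply Real.exp_le_exp.2
  nlinarith [le_cosh_self ht]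

-- u * exp(-u) ≤ 1 for u ≥ 0
lemma mul_exp_neg_le_one {u : ℝ} (hu : 0 ≤ u) : u * Real.exp (-u) ≤ 1 := by
  rw [Real.exp_neg]
  rw [mul_inv_le_iff₀ (Real.exp_pos u), one_mul]
  linarith [Real.add_one_le_exp u]

-- cosh t * exp(-x cosh t) ≤ (2/x) exp(-(x/2) t) for x > 0, t ≥ 0
lemma cosh_mul_exp_le {x t : ℝ} (hx : 0 < x) (ht : 0 ≤ t) :
    Real.cosh t * Real.exp (-x * Real.cosh t) ≤ (2 / x) * Real.exp (-(x/2) * t) := by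
  have h1 : Real.exp (-x * Real.cosh t) = Real.exp (-(x/2) * Real.cosh t) * Real.exp (-(x/2) * Real.cosh t) := by
    rw [← Real.exp_add]; ring_nf
  have h2 : Real.cosh t * Real.exp (-(x/2) * Real.cosh t) ≤ 2 / x := by
    have := mul_exp_neg_le_one (u := (x/2) * Real.cosh t)
      (by positivity)
    have hx2 : (0:ℝ) < x / 2 := by linarith
    have h0 : (x/2) * (Real.cosh t * Real.exp (-(x/2) * Real.cosh t)) ≤ 1 := by
      calc (x/2) * (Real.cosh t * Real.exp (-(x/2) * Real.cosh t))
          = ((x/2) * Real.cosh t) * Real.exp (-((x/2) * Real.cosh t)) := by ring_nf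
        _ ≤ 1 := this
    calc Real.cosh t * Real.exp (-(x/2) * Real.cosh t)
        = ((x/2) * (Real.cosh t * Real.exp (-(x/2) * Real.cosh t))) / (x/2) := by field_simp
      _ ≤ 1 / (x/2) := by gcongr
      _ = 2 / x := by field_simp
  have h3 : Real.exp (-(x/2) * Real.cosh t) ≤ Real.exp (-(x/2) * t) :=
    exp_cosh_le (by linarith) ht
  calc Real.cosh t * Real.exp (-x * Real.cosh t)
      = (Real.cosh t * Real.exp (-(x/2) * Real.cosh t)) * Real.exp (-(x/2) * Real.cosh t) := by
        rw [h1]; ring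
    _ ≤ (2/x) * Real.exp (-(x/2) * t) := by
        apply mul_le_mul h2 h3 (Real.exp_pos _).le (by positivity)

lemma integrableOn_exp_cosh {x : ℝ} (hx : 0 < x) :
    IntegrableOn (fun t => Real.exp (-x * Real.cosh t)) (Ioi 0) := by
  apply Integrable.mono' (g := fun t => Real.exp (-x * t)) (exp_neg_integrableOn_Ioi 0 hx)
  · exact (Continuous.aestronglyMeasurable (by continuity))
  · filter_upwards [ae_restrict_mem measurableSet_Ioi] with t ht
    rw [Real.norm_eq_abs, abs_of_pos (Real.exp_pos _)]
    exact exp_cosh_le hx.le (le_of_lt ht)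

lemma integrableOn_exp_cosh_mul {x : ℝ} (hx : 0 < x) :
    IntegrableOn (fun t => Real.exp (-x * Real.cosh t) * Real.cosh t) (Ioi 0) := by
  apply Integrable.mono' (g := fun t => (2/x) * Real.exp (-(x/2) * t))
    ((exp_neg_integrableOn_Ioi 0 (by linarith)).const_mul _)
  · exact (Continuous.aestronglyMeasurable (by continuity))
  · filter_upwards [ae_restrict_mem measurableSet_Ioi] with t ht
    rw [Real.norm_eq_abs, abs_of_pos (by positivity)]
    rw [mul_comm]
    exact cosh_mul_exp_le hx (le_of_lt ht)

-- integrability of 1/(cosh t - c) on Ioi 0 for c < 1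
lemma integrableOn_inv_cosh_sub {c : ℝ} (hc : c < 1) :
    IntegrableOn (fun t => 1 / (Real.cosh t - c)) (Ioi 0) := by
  have hpos : ∀ t : ℝ, 0 < Real.cosh t - c := fun t => by
    linarith [Real.one_le_cosh t]
  apply Integrable.mono' (g := fun t => max (Real.exp 2 / (1-c)) 4 * Real.exp (-t))
  · exact (((exp_neg_integrableOn_Ioi 0 one_pos).congr_fun (by intro t _; norm_num) measurableSet_Ioi).const_mul _)
  · exact (Continuous.aestronglyMeasurable (by
      apply Continuous.div continuous_const
      · exact Real.continuous_cosh.sub continuous_const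
      · exact fun t => (hpos t).ne'))
  · filter_upwards [ae_restrict_mem measurableSet_Ioi] with t ht
    have hmaxpos : (0:ℝ) < max (Real.exp 2 / (1-c)) 4 :=
      lt_of_lt_of_le (by norm_num) (le_max_right _ _)
    rw [Real.norm_eq_abs, abs_of_pos (div_pos one_pos (hpos t))]
    rcases le_or_gt t 2 with h2 | h2
    · calc 1 / (Real.cosh t - c) ≤ 1 / (1 - c) := by
            apply div_le_div_of_nonneg_left one_pos.le (by linarith) (by linarith [Real.one_le_cosh t])
        _ ≤ (Real.exp 2 / (1-c)) * Real.exp (-t) := by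
            rw [div_mul_eq_mul_div, ← Real.exp_add]
            apply div_le_div_of_nonneg_right _ (by linarith)
            nlinarith [Real.one_le_exp (by linarith : (0:ℝ) ≤ 2 + -t)]
        _ ≤ max (Real.exp 2 / (1-c)) 4 * Real.exp (-t) := by
            apply mul_le_mul_of_nonneg_right (le_max_left _ _) (Real.exp_pos _).le
    · have he : Real.exp t / 4 ≤ Real.cosh t - c := by
        have h4 : (4:ℝ) ≤ Real.exp t := by
          calc (4:ℝ) ≤ Real.exp 1 * Real.exp 1 := by nlinarith [Real.add_one_le_exp 1]
            _ = Real.exp 2 := by rw [← Real.exp_add]; norm_num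
            _ ≤ Real.exp t := Real.exp_le_exp.2 h2.le
        have hch2 : Real.exp t / 2 ≤ Real.cosh t := by
          rw [Real.cosh_eq]; linarith [(Real.exp_pos (-t)).le]
        linarith
      calc 1 / (Real.cosh t - c) ≤ 1 / (Real.exp t / 4) := by
            apply div_le_div_of_nonneg_left one_pos.le (by positivity) he
        _ = 4 * Real.exp (-t) := by rw [Real.exp_neg]; field_simp
        _ ≤ max (Real.exp 2 / (1-c)) 4 * Real.exp (-t) := by
            apply mul_le_mul_of_nonneg_right (le_max_right _ _) (Real.exp_pos _).le

lemma integral_inv_cosh_sub {θ : ℝ} (h0 : 0 < θ) (hπ : θ < π) :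
    ∫ t in Ioi (0:ℝ), 1 / (Real.cosh t - Real.cos θ) = (π - θ) / Real.sin θ := by
  set c := Real.cos θ
  set s := Real.sin θ
  have hs : 0 < s := Real.sin_pos_of_pos_of_lt_pi h0 hπ
  have hcsq : s^2 + c^2 = 1 := Real.sin_sq_add_cos_sq θ
  have hc : c < 1 := by nlinarith
  set F : ℝ → ℝ := fun t => (2 / s) * Real.arctan ((Real.exp t - c) / s)
  have hderiv : ∀ t ∈ Ioi (0:ℝ), HasDerivAt F (1 / (Real.cosh t - c)) t := by
    intro t _
    have h1 : HasDerivAt (fun t => (Real.exp t - c) / s) (Real.exp t / s) t :=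
      ((Real.hasDerivAt_exp t).sub_const c).div_const s
    have h2 := (Real.hasDerivAt_arctan ((Real.exp t - c) / s)).comp t h1
    have h3 := h2.const_mul (2 / s)
    refine h3.congr_deriv ?_
    have hden : 1 + ((Real.exp t - c) / s)^2 = Real.exp t * (2 * (Real.cosh t - c)) / s^2 := by
      rw [Real.cosh_eq, Real.exp_neg]
      field_simp
      linear_combination hcsq
    rw [hden]
    have het : Real.exp t ≠ 0 := Real.exp_ne_zero t
    have hch : Real.cosh t - c ≠ 0 := by
      have := Real.one_le_cosh t; linarith
    field_simp
  have hcont : ContinuousWithinAt F (Ici 0) 0 := by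
    apply Continuous.continuousWithinAt
    exact (continuous_const.mul ((Real.continuous_arctan.comp
      ((Real.continuous_exp.sub continuous_const).div_const s))))
  have htop : Tendsto F atTop (𝓝 ((2/s) * (π/2))) := by
    apply Tendsto.const_mul
    apply (Real.tendsto_arctan_atTop.mono_right nhdsWithin_le_nhds).comp
    apply Tendsto.atTop_div_const hs
    exact tendsto_atTop_add_const_right _ _ Real.tendsto_exp_atTop
  have := integral_Ioi_of_hasDerivAt_of_tendsto hcont hderiv
    (integrableOn_inv_cosh_sub hc) htop
  rw [this]
  have hF0 : F 0 = (2/s) * (θ/2) := by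
    have harg : (Real.exp 0 - c) / s = Real.tan (θ/2) := by
      rw [Real.exp_zero]
      have h1c : 1 - c = 2 * Real.sin (θ/2)^2 := by
        have h2m := Real.cos_two_mul (θ/2)
        rw [show 2*(θ/2) = θ by ring] at h2m
        have h3m := Real.sin_sq_add_cos_sq (θ/2)
        simp only [c]
        linarith
      have hsin : s = 2 * Real.sin (θ/2) * Real.cos (θ/2) := by
        have := Real.sin_two_mul (θ/2)
        rw [show 2 * (θ/2) = θ by ring] at this
        linarith
      have hsh : 0 < Real.sin (θ/2) := Real.sin_pos_of_pos_of_lt_pi (by linarith) (by linarith)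
      have hch : 0 < Real.cos (θ/2) := Real.cos_pos_of_mem_Ioo ⟨by linarith, by linarith⟩
      rw [h1c, hsin, Real.tan_eq_sin_div_cos]
      field_simp
    show (2/s) * Real.arctan ((Real.exp 0 - c)/s) = (2/s) * (θ/2)
    rw [harg, Real.arctan_tan (by linarith) (by linarith)]
  rw [hF0]
  field_simp

noncomputable def Jf (x θ : ℝ) : ℝ :=
  ∫ t in Ioi (0:ℝ), (Real.cos θ + Real.cosh t) * Real.exp (x*(Real.cos θ - Real.cosh t))
noncomputable def Af (x θ t : ℝ) : ℝ :=
  Real.sin θ * Real.exp (x*(Real.cos θ - Real.cosh t)) / (x * (Real.cosh t - Real.cos θ))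
noncomputable def Hf (x θ : ℝ) : ℝ := ∫ t in Ioi (0:ℝ), Af x θ t
noncomputable def Sf (x θ : ℝ) : ℝ :=
  ∫ t in Ioi (0:ℝ), (Real.exp (x*(1 - Real.cosh t)) - 1) / (Real.cosh t - Real.cos θ)
noncomputable def Adf (x θ t : ℝ) : ℝ := Real.exp (x*(Real.cos θ - Real.cosh t)) *
  (Real.cos θ/(x*(Real.cosh t - Real.cos θ)) - Real.sin θ^2/(Real.cosh t - Real.cos θ)
   - Real.sin θ^2/(x*(Real.cosh t - Real.cos θ)^2))
noncomputable def Bf (x θ t : ℝ) : ℝ :=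
  Real.sinh t * Real.exp (x*(Real.cos θ - Real.cosh t)) / (x * (Real.cosh t - Real.cos θ))
noncomputable def Btf (x θ t : ℝ) : ℝ := Real.exp (x*(Real.cos θ - Real.cosh t)) *
  (Real.cosh t/(x*(Real.cosh t - Real.cos θ)) - Real.sinh t^2/(Real.cosh t - Real.cos θ)
   - Real.sinh t^2/(x*(Real.cosh t - Real.cos θ)^2))

-- E bound
lemma exp_arg_le {x θ t : ℝ} (hx : 0 < x) :
    Real.exp (x*(Real.cos θ - Real.cosh t)) ≤ Real.exp x * Real.exp (-x * Real.cosh t) := by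
  rw [← Real.exp_add]
  apply Real.exp_le_exp.2
  nlinarith [Real.cos_le_one θ]

-- key pointwise divergence identity
lemma Adf_add_Btf {x θ t : ℝ} (hx : x ≠ 0) (hc : Real.cos θ < 1) :
    Adf x θ t + Btf x θ t
      = -((Real.cos θ + Real.cosh t) * Real.exp (x*(Real.cos θ - Real.cosh t))) := by
  have hD : 0 < Real.cosh t - Real.cos θ := by linarith [Real.one_le_cosh t]
  unfold Adf Btf
  rw [Real.sin_sq, Real.sinh_sq]
  field_simp
  ring

-- integrability of J's integrand
lemma integrableOn_J_integrand {x : ℝ} (hx : 0 < x) (θ : ℝ) :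
    IntegrableOn (fun t => (Real.cos θ + Real.cosh t) * Real.exp (x*(Real.cos θ - Real.cosh t)))
      (Ioi 0) := by
  apply Integrable.mono'
    (g := fun t => Real.exp x * (Real.exp (-x * Real.cosh t)
      + Real.exp (-x * Real.cosh t) * Real.cosh t))
  · exact (((integrableOn_exp_cosh hx).add (integrableOn_exp_cosh_mul hx)).const_mul _)
  · exact (Continuous.aestronglyMeasurable (by continuity))
  · filter_upwards [ae_restrict_mem measurableSet_Ioi] with t _
    rw [Real.norm_eq_abs, abs_mul, abs_of_pos (Real.exp_pos _)]
    have h1 : |Real.cos θ + Real.cosh t| ≤ 1 + Real.cosh t := by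
      have := abs_cos_le_one θ
      have := Real.cosh_pos t
      rw [abs_le]; constructor <;> nlinarith [neg_abs_le (Real.cos θ), le_abs_self (Real.cos θ)]
    calc |Real.cos θ + Real.cosh t| * Real.exp (x*(Real.cos θ - Real.cosh t))
        ≤ (1 + Real.cosh t) * (Real.exp x * Real.exp (-x * Real.cosh t)) := by
          apply mul_le_mul h1 (exp_arg_le hx) (Real.exp_pos _).le (by positivity)
      _ = Real.exp x * (Real.exp (-x * Real.cosh t) + Real.exp (-x * Real.cosh t) * Real.cosh t) := by
          ring

-- bound for the S integrand
lemma S_integrand_bound {x c t : ℝ} (hx : 0 < x) (hc : c ≤ 1) (ht : 0 < t) :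
    |(Real.exp (x*(1 - Real.cosh t)) - 1) / (Real.cosh t - c)|
      ≤ max (x * Real.exp 2) 4 * Real.exp (-t) := by
  have hC : 1 < Real.cosh t := Real.one_lt_cosh.2 (ne_of_gt ht)
  have hD : 0 < Real.cosh t - c := by linarith
  have hnum_nonpos : Real.exp (x*(1 - Real.cosh t)) - 1 ≤ 0 := by
    have : x*(1 - Real.cosh t) ≤ 0 := by nlinarith
    linarith [Real.exp_le_one_iff.2 this]
  have hnum_ge : -(x * (Real.cosh t - 1)) ≤ Real.exp (x*(1 - Real.cosh t)) - 1 := by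
    have := Real.add_one_le_exp (x*(1 - Real.cosh t))
    nlinarith
  have hnum_ge' : -1 ≤ Real.exp (x*(1 - Real.cosh t)) - 1 := by
    linarith [(Real.exp_pos (x*(1 - Real.cosh t))).le]
  rw [abs_div, abs_of_pos hD, abs_of_nonpos hnum_nonpos]
  rcases le_or_gt t 2 with h2 | h2
  · calc -(Real.exp (x*(1 - Real.cosh t)) - 1) / (Real.cosh t - c)
        ≤ x * (Real.cosh t - 1) / (Real.cosh t - c) := by
          gcongr
          linarith
      _ ≤ x := by
          rw [div_le_iff₀ hD]
          nlinarith
      _ ≤ (x * Real.exp 2) * Real.exp (-t) := by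
          rw [mul_assoc, ← Real.exp_add]
          nlinarith [Real.one_le_exp (by linarith : (0:ℝ) ≤ 2 + -t)]
      _ ≤ max (x * Real.exp 2) 4 * Real.exp (-t) :=
          mul_le_mul_of_nonneg_right (le_max_left _ _) (Real.exp_pos _).le
  · have h4 : (4:ℝ) ≤ Real.exp t := by
      calc (4:ℝ) ≤ Real.exp 1 * Real.exp 1 := by nlinarith [Real.add_one_le_exp 1]
        _ = Real.exp 2 := by rw [← Real.exp_add]; norm_num
        _ ≤ Real.exp t := Real.exp_le_exp.2 h2.le
    have hch2 : Real.exp t / 2 ≤ Real.cosh t := by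
      rw [Real.cosh_eq]; linarith [(Real.exp_pos (-t)).le]
    have he : Real.exp t / 4 ≤ Real.cosh t - c := by linarith
    calc -(Real.exp (x*(1 - Real.cosh t)) - 1) / (Real.cosh t - c)
        ≤ 1 / (Real.cosh t - c) := by
          gcongr
          linarith
      _ ≤ 1 / (Real.exp t / 4) := by
          apply div_le_div_of_nonneg_left one_pos.le (by positivity) he
      _ = 4 * Real.exp (-t) := by rw [Real.exp_neg]; field_simp
      _ ≤ max (x * Real.exp 2) 4 * Real.exp (-t) :=
          mul_le_mul_of_nonneg_right (le_max_right _ _) (Real.exp_pos _).le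

lemma integrableOn_S_integrand {x c : ℝ} (hx : 0 < x) (hc : c < 1) :
    IntegrableOn (fun t => (Real.exp (x*(1 - Real.cosh t)) - 1) / (Real.cosh t - c)) (Ioi 0) := by
  have hpos : ∀ t : ℝ, 0 < Real.cosh t - c := fun t => by linarith [Real.one_le_cosh t]
  apply Integrable.mono' (g := fun t => max (x * Real.exp 2) 4 * Real.exp (-t))
  · exact (((exp_neg_integrableOn_Ioi 0 one_pos).congr_fun
      (by intro t _; norm_num) measurableSet_Ioi).const_mul _)
  · exact (Continuous.aestronglyMeasurable (by
      apply Continuous.div (by continuity) (Real.continuous_cosh.sub continuous_const)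
      exact fun t => (hpos t).ne'))
  · filter_upwards [ae_restrict_mem measurableSet_Ioi] with t ht
    exact S_integrand_bound hx hc.le ht

lemma abs_Sf_le {x θ : ℝ} (hx : 0 < x) :
    |Sf x θ| ≤ max (x * Real.exp 2) 4 := by
  have hc : Real.cos θ ≤ 1 := Real.cos_le_one θ
  have h := norm_integral_le_of_norm_le
    (μ := volume.restrict (Ioi 0))
    (f := fun t => (Real.exp (x*(1 - Real.cosh t)) - 1) / (Real.cosh t - Real.cos θ))
    (g := fun t => max (x * Real.exp 2) 4 * Real.exp (-t))
    (((exp_neg_integrableOn_Ioi 0 one_pos).congr_fun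
      (by intro t _; norm_num) measurableSet_Ioi).const_mul _)
    (by filter_upwards [ae_restrict_mem measurableSet_Ioi] with t ht
        exact S_integrand_bound hx hc ht)
  rw [Real.norm_eq_abs] at h
  calc |Sf x θ| ≤ ∫ t in Ioi (0:ℝ), max (x * Real.exp 2) 4 * Real.exp (-t) := h
    _ = max (x * Real.exp 2) 4 * ∫ t in Ioi (0:ℝ), Real.exp (-t) := integral_const_mul _ _
    _ = max (x * Real.exp 2) 4 := by rw [integral_exp_neg_Ioi_zero, mul_one]

-- decomposition of H
lemma Hf_eq {x θ : ℝ} (hx : 0 < x) (h0 : 0 < θ) (hπ : θ < π) :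
    Hf x θ = Real.exp (x*(Real.cos θ - 1)) * ((π - θ) + Real.sin θ * Sf x θ) / x := by
  have hc : Real.cos θ < 1 := by
    nlinarith [Real.sin_pos_of_pos_of_lt_pi h0 hπ, Real.sin_sq_add_cos_sq θ]
  have hD : ∀ t : ℝ, 0 < Real.cosh t - Real.cos θ := fun t => by linarith [Real.one_le_cosh t]
  have hpt : ∀ t : ℝ, Af x θ t
      = (Real.sin θ * Real.exp (x*(Real.cos θ - 1)) / x) * (1/(Real.cosh t - Real.cos θ))
        + (Real.sin θ * Real.exp (x*(Real.cos θ - 1)) / x)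
          * ((Real.exp (x*(1 - Real.cosh t)) - 1) / (Real.cosh t - Real.cos θ)) := by
    intro t
    unfold Af
    rw [show x*(Real.cos θ - Real.cosh t) = x*(Real.cos θ - 1) + x*(1 - Real.cosh t) by ring,
      Real.exp_add]
    field_simp
    ring
  unfold Hf
  rw [integral_congr_ae (Filter.Eventually.of_forall fun t => hpt t)]
  rw [integral_add (((integrableOn_inv_cosh_sub hc).const_mul _))
    ((integrableOn_S_integrand hx hc).const_mul _)]
  rw [integral_const_mul, integral_const_mul, integral_inv_cosh_sub h0 hπ]
  show _ * ((π - θ)/Real.sin θ) + _ * Sf x θ = _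
  have hs : Real.sin θ ≠ 0 := (Real.sin_pos_of_pos_of_lt_pi h0 hπ).ne'
  field_simp

-- the limit of Hf along a filter approaching a zero of sin
lemma Hf_tendsto_aux {x θ₀ : ℝ} (hx : 0 < x) (hs : Real.sin θ₀ = 0) (l : Filter ℝ) [l.NeBot]
    (hl : Tendsto id l (𝓝 θ₀)) (hmem : Ioo (0:ℝ) π ∈ l) :
    Tendsto (Hf x) l (𝓝 (Real.exp (x*(Real.cos θ₀ - 1)) * (π - θ₀) / x)) := by
  set M := max (x * Real.exp 2) 4 with hMdef
  have hM0 : (0:ℝ) ≤ M := le_trans (by norm_num) (le_max_right _ _)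
  have h1 : Tendsto (fun θ => Real.exp (x*(Real.cos θ - 1)) * (π - θ) / x) l
      (𝓝 (Real.exp (x*(Real.cos θ₀ - 1)) * (π - θ₀) / x)) := by
    have hcont : Continuous (fun θ => Real.exp (x*(Real.cos θ - 1)) * (π - θ) / x) := by
      continuity
    simpa using (hcont.tendsto θ₀).comp hl
  have h2 : Tendsto (fun θ => Real.exp (x*(Real.cos θ - 1)) * (Real.sin θ * Sf x θ) / x) l
      (𝓝 0) := by
    apply squeeze_zero_norm' (a := fun θ => |Real.sin θ| * (M/x))
    · filter_upwards [hmem] with θ hθ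
      have he1 : Real.exp (x*(Real.cos θ - 1)) ≤ 1 := by
        apply Real.exp_le_one_iff.2
        nlinarith [Real.cos_le_one θ]
      have hM : |Sf x θ| ≤ M := abs_Sf_le hx
      rw [Real.norm_eq_abs, abs_div, abs_mul, abs_mul, abs_of_pos hx,
        abs_of_pos (Real.exp_pos _)]
      calc Real.exp (x*(Real.cos θ - 1)) * (|Real.sin θ| * |Sf x θ|) / x
          ≤ 1 * (|Real.sin θ| * M) / x := by
            gcongr
        _ = |Real.sin θ| * (M/x) := by ring
    · have hcont : Continuous (fun θ => |Real.sin θ| * (M/x)) := by continuity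
      have := (hcont.tendsto θ₀).comp hl
      simpa [hs] using this
  have heq : (fun θ => Real.exp (x*(Real.cos θ - 1)) * (π - θ) / x
      + Real.exp (x*(Real.cos θ - 1)) * (Real.sin θ * Sf x θ) / x) =ᶠ[l] Hf x := by
    filter_upwards [hmem] with θ hθ
    rw [Hf_eq hx hθ.1 hθ.2]; ring
  simpa using (h1.add h2).congr' heq

lemma Hf_tendsto_zero {x : ℝ} (hx : 0 < x) :
    Tendsto (Hf x) (nhdsWithin 0 (Ioi 0)) (𝓝 (π/x)) := by
  have := Hf_tendsto_aux hx Real.sin_zero (nhdsWithin 0 (Ioi 0))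
    (tendsto_id.mono_left nhdsWithin_le_nhds)
    (Ioo_mem_nhdsGT Real.pi_pos)
  simpa using this

lemma Hf_tendsto_pi {x : ℝ} (hx : 0 < x) :
    Tendsto (Hf x) (nhdsWithin π (Iio π)) (𝓝 0) := by
  have := Hf_tendsto_aux hx Real.sin_pi (nhdsWithin π (Iio π))
    (tendsto_id.mono_left nhdsWithin_le_nhds)
    (Ioo_mem_nhdsLT Real.pi_pos)
  simpa using this

lemma continuous_Jf {x : ℝ} (hx : 0 < x) : Continuous (Jf x) := by
  apply MeasureTheory.continuous_of_dominated
    (bound := fun t => Real.exp x * (Real.exp (-x * Real.cosh t)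
      + Real.exp (-x * Real.cosh t) * Real.cosh t))
  · intro θ
    exact (Continuous.aestronglyMeasurable (by continuity))
  · intro θ
    filter_upwards [ae_restrict_mem measurableSet_Ioi] with t _
    rw [Real.norm_eq_abs, abs_mul, abs_of_pos (Real.exp_pos _)]
    have h1 : |Real.cos θ + Real.cosh t| ≤ 1 + Real.cosh t := by
      have := Real.cosh_pos t
      rw [abs_le]
      constructor <;> nlinarith [neg_abs_le (Real.cos θ), le_abs_self (Real.cos θ),
        abs_cos_le_one θ]
    calc |Real.cos θ + Real.cosh t| * Real.exp (x*(Real.cos θ - Real.cosh t))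
        ≤ (1 + Real.cosh t) * (Real.exp x * Real.exp (-x * Real.cosh t)) := by
          apply mul_le_mul h1 (exp_arg_le hx) (Real.exp_pos _).le (by positivity)
      _ = Real.exp x * (Real.exp (-x * Real.cosh t) + Real.exp (-x * Real.cosh t) * Real.cosh t) := by
          ring
  · exact (((integrableOn_exp_cosh hx).add (integrableOn_exp_cosh_mul hx)).const_mul _)
  · filter_upwards with t
    continuity

lemma cos_lt_one' {θ : ℝ} (h0 : 0 < θ) (hπ : θ ≤ π) : Real.cos θ < 1 := by
  have := Real.cos_lt_cos_of_nonneg_of_le_pi (le_refl 0) hπ h0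
  simpa using this

-- derivative of A in θ
lemma hasDerivAt_Af {x t : ℝ} (hx : 0 < x) {θ : ℝ} (hc : Real.cos θ < 1) :
    HasDerivAt (fun θ => Af x θ t) (Adf x θ t) θ := by
  have hD : 0 < Real.cosh t - Real.cos θ := by linarith [Real.one_le_cosh t]
  have hE : HasDerivAt (fun θ => Real.exp (x*(Real.cos θ - Real.cosh t)))
      (Real.exp (x*(Real.cos θ - Real.cosh t)) * (x * (-Real.sin θ))) θ := by
    have h1 : HasDerivAt (fun θ => x*(Real.cos θ - Real.cosh t)) (x * (-Real.sin θ)) θ :=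
      ((Real.hasDerivAt_cos θ).sub_const _).const_mul x
    simpa [mul_comm] using h1.exp
  have hN := (Real.hasDerivAt_sin θ).mul hE
  have hDen : HasDerivAt (fun θ => x * (Real.cosh t - Real.cos θ)) (x * Real.sin θ) θ := by
    have := ((Real.hasDerivAt_cos θ).const_sub (Real.cosh t)).const_mul x
    simpa using this
  have hne : x * (Real.cosh t - Real.cos θ) ≠ 0 := ne_of_gt (mul_pos hx hD)
  have := hN.div hDen hne
  refine this.congr_deriv ?_
  unfold Adf
  simp only [Pi.mul_apply]
  field_simp
  ring

-- derivative of B in t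
lemma hasDerivAt_Bf {x θ : ℝ} (hx : 0 < x) (hc : Real.cos θ < 1) (t : ℝ) :
    HasDerivAt (fun t => Bf x θ t) (Btf x θ t) t := by
  have hD : 0 < Real.cosh t - Real.cos θ := by linarith [Real.one_le_cosh t]
  have hE : HasDerivAt (fun t => Real.exp (x*(Real.cos θ - Real.cosh t)))
      (Real.exp (x*(Real.cos θ - Real.cosh t)) * (x * (-Real.sinh t))) t := by
    have h1 : HasDerivAt (fun t => x*(Real.cos θ - Real.cosh t)) (x * (-Real.sinh t)) t :=
      ((Real.hasDerivAt_cosh t).const_sub _).const_mul x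
    simpa [mul_comm] using h1.exp
  have hN := (Real.hasDerivAt_sinh t).mul hE
  have hDen : HasDerivAt (fun t => x * (Real.cosh t - Real.cos θ)) (x * Real.sinh t) t := by
    have := ((Real.hasDerivAt_cosh t).sub_const (Real.cos θ)).const_mul x
    simpa using this
  have hne : x * (Real.cosh t - Real.cos θ) ≠ 0 := ne_of_gt (mul_pos hx hD)
  have := hN.div hDen hne
  refine this.congr_deriv ?_
  unfold Btf
  simp only [Pi.mul_apply]
  field_simp
  ring

lemma sin_sq_le_one' (θ : ℝ) : Real.sin θ ^ 2 ≤ 1 := by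
  nlinarith [Real.sin_sq_add_cos_sq θ, sq_nonneg (Real.cos θ)]

lemma continuous_E (x c : ℝ) : Continuous (fun t => Real.exp (x*(c - Real.cosh t))) :=
  Real.continuous_exp.comp (continuous_const.mul (continuous_const.sub Real.continuous_cosh))

lemma continuous_Adf {x θ : ℝ} (hx : 0 < x) (hc : Real.cos θ < 1) :
    Continuous (Adf x θ) := by
  have hDpos : ∀ t : ℝ, 0 < Real.cosh t - Real.cos θ :=
    fun t => by linarith [Real.one_le_cosh t]
  have hDc : Continuous (fun t : ℝ => Real.cosh t - Real.cos θ) :=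
    Real.continuous_cosh.sub continuous_const
  have c1 : Continuous (fun t => Real.cos θ/(x*(Real.cosh t - Real.cos θ))) :=
    continuous_const.div (continuous_const.mul hDc)
      (fun t => ne_of_gt (mul_pos hx (hDpos t)))
  have c2 : Continuous (fun t => Real.sin θ^2/(Real.cosh t - Real.cos θ)) :=
    continuous_const.div hDc (fun t => ne_of_gt (hDpos t))
  have c3 : Continuous (fun t => Real.sin θ^2/(x*(Real.cosh t - Real.cos θ)^2)) :=
    continuous_const.div (continuous_const.mul (hDc.pow 2))
      (fun t => ne_of_gt (mul_pos hx (pow_pos (hDpos t) 2)))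
  exact (continuous_E x _).mul ((c1.sub c2).sub c3)

lemma continuous_Af {x θ : ℝ} (hx : 0 < x) (hc : Real.cos θ < 1) :
    Continuous (fun t => Af x θ t) := by
  have hDpos : ∀ t : ℝ, 0 < Real.cosh t - Real.cos θ :=
    fun t => by linarith [Real.one_le_cosh t]
  exact (continuous_const.mul (continuous_E x _)).div
    (continuous_const.mul (Real.continuous_cosh.sub continuous_const))
    (fun t => ne_of_gt (mul_pos hx (hDpos t)))

lemma continuous_Bf {x θ : ℝ} (hx : 0 < x) (hc : Real.cos θ < 1) :
    Continuous (fun t => Bf x θ t) := by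
  have hDpos : ∀ t : ℝ, 0 < Real.cosh t - Real.cos θ :=
    fun t => by linarith [Real.one_le_cosh t]
  exact (Real.continuous_sinh.mul (continuous_E x _)).div
    (continuous_const.mul (Real.continuous_cosh.sub continuous_const))
    (fun t => ne_of_gt (mul_pos hx (hDpos t)))

lemma hasDerivAt_Hf {x θ₀ : ℝ} (hx : 0 < x) (h0 : 0 < θ₀) (hπ : θ₀ < π) :
    IntegrableOn (Adf x θ₀) (Ioi 0) ∧
      HasDerivAt (Hf x) (∫ t in Ioi (0:ℝ), Adf x θ₀ t) θ₀ := by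
  set ε := min θ₀ (π - θ₀) / 2 with hεdef
  have hε : 0 < ε := by
    have h1 : 0 < min θ₀ (π - θ₀) := lt_min h0 (by linarith)
    positivity
  have hεθ : ε ≤ θ₀ / 2 := by
    have := min_le_left θ₀ (π - θ₀); rw [hεdef]; linarith
  have hεπ : ε ≤ (π - θ₀) / 2 := by
    have := min_le_right θ₀ (π - θ₀); rw [hεdef]; linarith
  set m := 1 - Real.cos (θ₀ - ε) with hmdef
  have hm : 0 < m := by
    have := cos_lt_one' (by linarith : 0 < θ₀ - ε) (by linarith : θ₀ - ε ≤ π)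
    rw [hmdef]; linarith
  have hball : ∀ θ ∈ Metric.ball θ₀ ε, 0 < θ ∧ θ < π ∧ ∀ t : ℝ, m ≤ Real.cosh t - Real.cos θ := by
    intro θ hθ
    have habs := abs_lt.1 (by simpa [Real.dist_eq] using Metric.mem_ball.1 hθ)
    have hθ1 : 0 < θ := by linarith
    have hθ2 : θ < π := by linarith
    refine ⟨hθ1, hθ2, fun t => ?_⟩
    have hcc : Real.cos θ ≤ Real.cos (θ₀ - ε) :=
      Real.cos_le_cos_of_nonneg_of_le_pi (by linarith) (by linarith) (by linarith)
    have := Real.one_le_cosh t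
    rw [hmdef]; linarith
  have hc0 := cos_lt_one' h0 hπ.le
  have hD0 : ∀ t : ℝ, 0 < Real.cosh t - Real.cos θ₀ :=
    fun t => by linarith [Real.one_le_cosh t]
  -- measurability
  have hmeas : ∀ᶠ θ in 𝓝 θ₀, AEStronglyMeasurable (fun t => Af x θ t)
      (volume.restrict (Ioi 0)) := by
    filter_upwards [Ioo_mem_nhds h0 hπ] with θ hθ
    exact (continuous_Af hx (cos_lt_one' hθ.1 hθ.2.le)).aestronglyMeasurable
  -- integrability of Af x θ₀
  have hint : Integrable (fun t => Af x θ₀ t) (volume.restrict (Ioi 0)) := by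
    apply Integrable.mono'
      (g := fun t => (1/(x*(1 - Real.cos θ₀))) * (Real.exp x * Real.exp (-x * Real.cosh t)))
    · exact (((integrableOn_exp_cosh hx).const_mul _).const_mul _)
    · exact (continuous_Af hx hc0).aestronglyMeasurable
    · filter_upwards [ae_restrict_mem measurableSet_Ioi] with t _
      unfold Af
      rw [Real.norm_eq_abs, abs_div, abs_mul, abs_of_pos (Real.exp_pos _),
        abs_of_pos (mul_pos hx (hD0 t))]
      calc |Real.sin θ₀| * Real.exp (x*(Real.cos θ₀ - Real.cosh t))
            / (x * (Real.cosh t - Real.cos θ₀))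
          ≤ 1 * (Real.exp x * Real.exp (-x * Real.cosh t)) / (x * (1 - Real.cos θ₀)) := by
            apply div_le_div₀ (by positivity)
              (mul_le_mul (abs_sin_le_one θ₀) (exp_arg_le hx) (Real.exp_pos _).le one_pos.le)
              (by nlinarith) (by nlinarith [Real.one_le_cosh t])
        _ = (1/(x*(1 - Real.cos θ₀))) * (Real.exp x * Real.exp (-x * Real.cosh t)) := by
            ring
  -- measurability of Adf
  have hmeas' : AEStronglyMeasurable (fun t => Adf x θ₀ t) (volume.restrict (Ioi 0)) :=
    (continuous_Adf hx hc0).aestronglyMeasurable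
  -- bound
  have hbound : ∀ᵐ t ∂(volume.restrict (Ioi (0:ℝ))), ∀ θ ∈ Metric.ball θ₀ ε,
      ‖Adf x θ t‖ ≤ (1/(x*m) + 1/m + 1/(x*m^2)) * (Real.exp x * Real.exp (-x * Real.cosh t)) := by
    filter_upwards [ae_restrict_mem measurableSet_Ioi] with t _
    intro θ hθ
    obtain ⟨hθ1, hθ2, hD⟩ := hball θ hθ
    have hDt := hD t
    have hDpos : 0 < Real.cosh t - Real.cos θ := lt_of_lt_of_le hm hDt
    set T1 := Real.cos θ/(x*(Real.cosh t - Real.cos θ)) with hT1def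
    set T2 := Real.sin θ^2/(Real.cosh t - Real.cos θ) with hT2def
    set T3 := Real.sin θ^2/(x*(Real.cosh t - Real.cos θ)^2) with hT3def
    have hT1 : |T1| ≤ 1/(x*m) := by
      rw [hT1def, abs_div, abs_of_pos (mul_pos hx hDpos)]
      exact div_le_div₀ (by positivity) (abs_cos_le_one θ) (by positivity)
        (mul_le_mul_of_nonneg_left hDt hx.le)
    have hT2 : |T2| ≤ 1/m := by
      rw [hT2def, abs_div, abs_of_pos hDpos, abs_pow]
      apply div_le_div₀ (by positivity) ?_ hm hDt
      nlinarith [abs_sin_le_one θ, abs_nonneg (Real.sin θ)]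
    have hT3 : |T3| ≤ 1/(x*m^2) := by
      rw [hT3def, abs_div, abs_of_pos (mul_pos hx (pow_pos hDpos 2)), abs_pow]
      apply div_le_div₀ (by positivity) ?_ (by positivity)
        (mul_le_mul_of_nonneg_left (pow_le_pow_left₀ hm.le hDt 2) hx.le)
      nlinarith [abs_sin_le_one θ, abs_nonneg (Real.sin θ)]
    have hTsum : |T1 - T2 - T3| ≤ 1/(x*m) + 1/m + 1/(x*m^2) := by
      calc |T1 - T2 - T3| ≤ |T1 - T2| + |T3| := abs_sub _ _
        _ ≤ (|T1| + |T2|) + |T3| := add_le_add_left (abs_sub _ _) _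
        _ ≤ (1/(x*m) + 1/m) + 1/(x*m^2) := by
            apply add_le_add (add_le_add hT1 hT2) hT3
        _ = 1/(x*m) + 1/m + 1/(x*m^2) := by ring
    show |Real.exp (x*(Real.cos θ - Real.cosh t)) * (T1 - T2 - T3)| ≤ _
    rw [abs_mul, abs_of_pos (Real.exp_pos _)]
    calc Real.exp (x*(Real.cos θ - Real.cosh t)) * |T1 - T2 - T3|
        ≤ (Real.exp x * Real.exp (-x * Real.cosh t)) * (1/(x*m) + 1/m + 1/(x*m^2)) :=
          mul_le_mul (exp_arg_le hx) hTsum (abs_nonneg _) (by positivity)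
      _ = (1/(x*m) + 1/m + 1/(x*m^2)) * (Real.exp x * Real.exp (-x * Real.cosh t)) := by ring
  have hbint : Integrable
      (fun t => (1/(x*m) + 1/m + 1/(x*m^2)) * (Real.exp x * Real.exp (-x * Real.cosh t)))
      (volume.restrict (Ioi 0)) :=
    (((integrableOn_exp_cosh hx).const_mul _).const_mul _)
  have hdiff : ∀ᵐ t ∂(volume.restrict (Ioi (0:ℝ))), ∀ θ ∈ Metric.ball θ₀ ε,
      HasDerivAt (fun θ => Af x θ t) (Adf x θ t) θ := by
    filter_upwards [ae_restrict_mem measurableSet_Ioi] with t _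
    intro θ hθ
    obtain ⟨hθ1, hθ2, _⟩ := hball θ hθ
    exact hasDerivAt_Af hx (cos_lt_one' hθ1 hθ2.le)
  have key := hasDerivAt_integral_of_dominated_loc_of_deriv_le (Metric.ball_mem_nhds θ₀ hε) hmeas hint hmeas'
    hbound hbint hdiff
  exact ⟨key.1, key.2⟩

lemma Bf_tendsto_atTop {x θ : ℝ} (hx : 0 < x) (hc : Real.cos θ < 1) :
    Tendsto (fun t => Bf x θ t) atTop (𝓝 0) := by
  have hm0 : 0 < 1 - Real.cos θ := by linarith
  apply squeeze_zero_norm'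
    (a := fun t => (Real.exp x / (x * (1 - Real.cos θ))) * ((2/x) * Real.exp (-(x/2) * t)))
  · filter_upwards [eventually_ge_atTop (0:ℝ)] with t ht
    have hD : 0 < Real.cosh t - Real.cos θ := by linarith [Real.one_le_cosh t]
    unfold Bf
    rw [Real.norm_eq_abs, abs_div, abs_mul, abs_of_pos (Real.exp_pos _),
      abs_of_pos (mul_pos hx hD)]
    have hsinh : |Real.sinh t| ≤ Real.cosh t := by
      rw [Real.abs_sinh, ← Real.cosh_abs]
      rw [Real.cosh_eq, Real.sinh_eq]
      linarith [(Real.exp_pos (-|t|)).le]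
    calc |Real.sinh t| * Real.exp (x*(Real.cos θ - Real.cosh t)) / (x * (Real.cosh t - Real.cos θ))
        ≤ Real.cosh t * (Real.exp x * Real.exp (-x * Real.cosh t)) / (x * (1 - Real.cos θ)) := by
          apply div_le_div₀ (by positivity)
            (mul_le_mul hsinh (exp_arg_le hx) (Real.exp_pos _).le (Real.cosh_pos t).le)
            (by positivity) (by nlinarith [Real.one_le_cosh t])
      _ = (Real.exp x / (x * (1 - Real.cos θ))) * (Real.cosh t * Real.exp (-x * Real.cosh t)) := by
          ring
      _ ≤ (Real.exp x / (x * (1 - Real.cos θ))) * ((2/x) * Real.exp (-(x/2) * t)) := by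
          apply mul_le_mul_of_nonneg_left (cosh_mul_exp_le hx ht) (by positivity)
  · have h1 : Tendsto (fun t : ℝ => -(x/2) * t) atTop atBot := by
      apply Tendsto.const_mul_atTop_of_neg ?_ tendsto_id
      linarith
    have h2 : Tendsto (fun t : ℝ => Real.exp (-(x/2) * t)) atTop (𝓝 0) :=
      Real.tendsto_exp_atBot.comp h1
    have := (h2.const_mul ((2:ℝ)/x)).const_mul (Real.exp x / (x * (1 - Real.cos θ)))
    simpa using this

lemma integral_Adf {x θ : ℝ} (hx : 0 < x) (h0 : 0 < θ) (hπ : θ < π)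
    (hInt : IntegrableOn (Adf x θ) (Ioi 0)) :
    ∫ t in Ioi (0:ℝ), Adf x θ t = - Jf x θ := by
  have hc : Real.cos θ < 1 := cos_lt_one' h0 hπ.le
  have hpt : ∀ t : ℝ, Btf x θ t
      = -((Real.cos θ + Real.cosh t) * Real.exp (x*(Real.cos θ - Real.cosh t))) - Adf x θ t :=
    fun t => by linarith [Adf_add_Btf (t := t) hx.ne' hc]
  have hBt_int : IntegrableOn (Btf x θ) (Ioi 0) := by
    apply Integrable.congr (((integrableOn_J_integrand hx θ).neg).sub hInt)
    exact Filter.Eventually.of_forall fun t => (hpt t).symm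
  have hBint0 : ∫ t in Ioi (0:ℝ), Btf x θ t = 0 - Bf x θ 0 := by
    apply integral_Ioi_of_hasDerivAt_of_tendsto
      ((continuous_Bf hx hc).continuousWithinAt)
      (fun t _ => hasDerivAt_Bf hx hc t) hBt_int (Bf_tendsto_atTop hx hc)
  have hB0 : Bf x θ 0 = 0 := by unfold Bf; simp
  rw [hB0, sub_zero] at hBint0
  have : ∫ t in Ioi (0:ℝ), Adf x θ t
      = ∫ t in Ioi (0:ℝ),
        (-((Real.cos θ + Real.cosh t) * Real.exp (x*(Real.cos θ - Real.cosh t))) - Btf x θ t) := by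
    apply integral_congr_ae
    apply Filter.Eventually.of_forall fun t => ?_
    show _ = -((Real.cos θ + Real.cosh t) * Real.exp (x*(Real.cos θ - Real.cosh t))) - Btf x θ t
    rw [hpt t]; ring
  rw [this]
  have h2 := integral_sub ((integrableOn_J_integrand hx θ).neg) hBt_int
  simp only [Pi.neg_apply] at h2
  rw [h2, hBint0, sub_zero, integral_neg]
  rfl

lemma integral_Jf {x : ℝ} (hx : 0 < x) : ∫ θ in (0:ℝ)..π, Jf x θ = π / x := by
  have hJc : Continuous (Jf x) := continuous_Jf hx
  set P : ℝ → ℝ := fun y => ∫ θ in (0:ℝ)..y, Jf x θ with hPdef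
  have hP : ∀ y : ℝ, HasDerivAt P (Jf x y) y := by
    intro y
    apply intervalIntegral.integral_hasDerivAt_right (hJc.intervalIntegrable _ _)
      hJc.aestronglyMeasurable.stronglyMeasurableAtFilter hJc.continuousAt
  have hPc : Continuous P := continuous_iff_continuousAt.2 fun y => (hP y).continuousAt
  have hHd : ∀ b ∈ Ioo (0:ℝ) π, HasDerivAt (Hf x) (-(Jf x b)) b := by
    intro b hb
    obtain ⟨hint, hd⟩ := hasDerivAt_Hf hx hb.1 hb.2
    rwa [integral_Adf hx hb.1 hb.2 hint] at hd
  have key : ∀ b ∈ Ioo (0:ℝ) π, P b = π/x - Hf x b := by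
    intro b hb
    have t1 : Tendsto (fun a => P b - P a) (nhdsWithin 0 (Ioi 0)) (𝓝 (P b)) := by
      have h1 : Tendsto P (nhdsWithin 0 (Ioi 0)) (𝓝 (P 0)) :=
        (hPc.tendsto 0).mono_left nhdsWithin_le_nhds
      have h2 := tendsto_const_nhds (x := P b) (f := nhdsWithin (0:ℝ) (Ioi 0)) |>.sub h1
      have hP0 : P 0 = 0 := intervalIntegral.integral_same
      rw [hP0, sub_zero] at h2
      exact h2
    have t2 : Tendsto (fun a => Hf x a - Hf x b) (nhdsWithin 0 (Ioi 0))
        (𝓝 (π/x - Hf x b)) := (Hf_tendsto_zero hx).sub_const _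
    have heq : (fun a => P b - P a) =ᶠ[nhdsWithin (0:ℝ) (Ioi 0)]
        (fun a => Hf x a - Hf x b) := by
      filter_upwards [Ioo_mem_nhdsGT hb.1] with a ha
      have hab : a < b := ha.2
      have hsplit : P a + ∫ θ in a..b, Jf x θ = P b :=
        intervalIntegral.integral_add_adjacent_intervals (hJc.intervalIntegrable _ _)
          (hJc.intervalIntegrable _ _)
      have hftc : ∫ θ in a..b, -(Jf x θ) = Hf x b - Hf x a := by
        apply intervalIntegral.integral_eq_sub_of_hasDerivAt
        · intro θ hθ
          rw [uIcc_of_le hab.le] at hθ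
          apply hHd
          exact ⟨lt_of_lt_of_le ha.1 hθ.1, lt_of_le_of_lt hθ.2 hb.2⟩
        · exact (hJc.neg.intervalIntegrable _ _)
      rw [intervalIntegral.integral_neg] at hftc
      have : ∫ θ in a..b, Jf x θ = Hf x a - Hf x b := by linarith
      linarith
    exact tendsto_nhds_unique (t1.congr' heq) t2
  have t3 : Tendsto P (nhdsWithin π (Iio π)) (𝓝 (P π)) :=
    (hPc.tendsto π).mono_left nhdsWithin_le_nhds
  have t4 : Tendsto (fun b => π/x - Hf x b) (nhdsWithin π (Iio π)) (𝓝 (π/x - 0)) :=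
    tendsto_const_nhds.sub (Hf_tendsto_pi hx)
  have heq2 : P =ᶠ[nhdsWithin π (Iio π)] (fun b => π/x - Hf x b) := by
    filter_upwards [Ioo_mem_nhdsLT Real.pi_pos] with b hb
    exact key b hb
  have := tendsto_nhds_unique (t3.congr' heq2) t4
  rw [sub_zero] at this
  exact this

lemma wronskian {x : ℝ} (hx : 0 < x) : I0 x * K1 x + I1 x * K0 x = 1 / x := by
  have hpt : ∀ θ : ℝ, Real.exp (x*Real.cos θ) * K1 x
      + Real.exp (x*Real.cos θ) * Real.cos θ * K0 x = Jf x θ := by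
    intro θ
    unfold K1 K0 Jf
    rw [← integral_const_mul, ← integral_const_mul,
      ← integral_add (((integrableOn_exp_cosh_mul hx)).const_mul _)
        (((integrableOn_exp_cosh hx)).const_mul _)]
    apply integral_congr_ae
    apply Filter.Eventually.of_forall fun t => ?_
    show Real.exp (x*Real.cos θ) * (Real.exp (-x * Real.cosh t) * Real.cosh t)
        + Real.exp (x*Real.cos θ) * Real.cos θ * Real.exp (-x * Real.cosh t)
        = (Real.cos θ + Real.cosh t) * Real.exp (x*(Real.cos θ - Real.cosh t))
    rw [show x*(Real.cos θ - Real.cosh t) = x*Real.cos θ + (-x * Real.cosh t) by ring,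
      Real.exp_add]
    ring
  have h1 : I0 x * K1 x + I1 x * K0 x = (1/π) * ∫ θ in (0:ℝ)..π, Jf x θ := by
    unfold I0 I1
    rw [mul_assoc, mul_assoc, ← mul_add]
    congr 1
    rw [← intervalIntegral.integral_mul_const, ← intervalIntegral.integral_mul_const,
      ← intervalIntegral.integral_add
        (Continuous.intervalIntegrable (by continuity) _ _)
        (Continuous.intervalIntegrable (by continuity) _ _)]
    apply intervalIntegral.integral_congr
    intro θ _
    rw [← hpt θ]
  rw [h1, integral_Jf hx]
  field_simp

lemma hasDerivAt_I0 (x : ℝ) : HasDerivAt I0 (I1 x) x := by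
  have key : HasDerivAt (fun y => ∫ θ in (0:ℝ)..π, Real.exp (y * Real.cos θ))
      (∫ θ in (0:ℝ)..π, Real.exp (x * Real.cos θ) * Real.cos θ) x := by
    have := intervalIntegral.hasDerivAt_integral_of_dominated_loc_of_deriv_le
      (F := fun y θ => Real.exp (y * Real.cos θ))
      (F' := fun y θ => Real.exp (y * Real.cos θ) * Real.cos θ)
      (x₀ := x) (a := (0:ℝ)) (b := π) (μ := volume)
      (bound := fun _ => Real.exp (|x| + 1)) (s := Metric.ball x 1) (Metric.ball_mem_nhds x one_pos)
      ?_ ?_ ?_ ?_ ?_ ?_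
    · exact this.2
    · filter_upwards with y
      exact (Continuous.aestronglyMeasurable (by continuity))
    · apply Continuous.intervalIntegrable; continuity
    · exact (Continuous.aestronglyMeasurable (by continuity))
    · filter_upwards with θ _ y hy
      have h1 : |y * Real.cos θ| ≤ |x| + 1 := by
        have := abs_cos_le_one θ
        have hy' : |y - x| < 1 := by simpa [Real.dist_eq] using mem_ball_iff_norm.1 hy
        have : |y| ≤ |x| + 1 := by
          calc |y| = |x + (y - x)| := by ring_nf
            _ ≤ |x| + |y - x| := abs_add_le _ _
            _ ≤ |x| + 1 := by linarith
        calc |y * Real.cos θ| = |y| * |Real.cos θ| := abs_mul _ _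
          _ ≤ (|x| + 1) * 1 := by
              apply mul_le_mul this (abs_cos_le_one θ) (abs_nonneg _) (by positivity)
          _ = |x| + 1 := mul_one _
      rw [Real.norm_eq_abs, abs_mul]
      calc |Real.exp (y * Real.cos θ)| * |Real.cos θ|
          ≤ Real.exp (|x|+1) * 1 := by
            apply mul_le_mul _ (abs_cos_le_one θ) (abs_nonneg _) (Real.exp_pos _).le
            rw [abs_of_pos (Real.exp_pos _)]
            exact Real.exp_le_exp.2 (le_trans (le_abs_self _) h1)
        _ = Real.exp (|x|+1) := mul_one _
    · apply Continuous.intervalIntegrable; continuity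
    · filter_upwards with θ _ y _
      simpa [mul_comm] using ((hasDerivAt_id y).mul_const (Real.cos θ)).exp
  have : I0 = fun y => (1/π) * ∫ θ in (0:ℝ)..π, Real.exp (y * Real.cos θ) := rfl
  rw [this, I1]
  simpa using key.const_mul (1/π)

lemma hasDerivAt_K0 {x : ℝ} (hx : 0 < x) : HasDerivAt K0 (-K1 x) x := by
  have := hasDerivAt_integral_of_dominated_loc_of_deriv_le
    (F := fun y t => Real.exp (-y * Real.cosh t))
    (F' := fun y t => -(Real.exp (-y * Real.cosh t) * Real.cosh t))
    (x₀ := x) (μ := volume.restrict (Ioi 0))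
    (bound := fun t => (4/x) * Real.exp (-(x/4) * t)) (s := Metric.ball x (x/2))
    (Metric.ball_mem_nhds x (by positivity))
    ?_ ?_ ?_ ?_ ?_ ?_
  · have h2 : HasDerivAt (fun y => ∫ t in Ioi (0:ℝ), Real.exp (-y * Real.cosh t))
        (∫ t in Ioi (0:ℝ), -(Real.exp (-x * Real.cosh t) * Real.cosh t)) x := this.2
    have : (∫ t in Ioi (0:ℝ), -(Real.exp (-x * Real.cosh t) * Real.cosh t)) = -K1 x := by
      rw [integral_neg]; rfl
    rw [this] at h2; exact h2
  · filter_upwards with y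
    exact (Continuous.aestronglyMeasurable (by continuity))
  · exact integrableOn_exp_cosh hx
  · exact (Continuous.aestronglyMeasurable (by continuity))
  · filter_upwards [ae_restrict_mem measurableSet_Ioi] with t ht y hy
    have hy' : x/2 < y := by
      have := abs_lt.1 (by simpa [Real.dist_eq] using mem_ball_iff_norm.1 hy)
      linarith [this.1]
    rw [Real.norm_eq_abs, abs_neg, abs_mul, abs_of_pos (Real.exp_pos _),
      abs_of_pos (Real.cosh_pos t)]
    calc Real.exp (-y * Real.cosh t) * Real.cosh t
        ≤ Real.exp (-(x/2) * Real.cosh t) * Real.cosh t := by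
          apply mul_le_mul_of_nonneg_right _ (Real.cosh_pos t).le
          apply Real.exp_le_exp.2
          nlinarith [Real.cosh_pos t, (Real.one_le_cosh t)]
      _ = Real.cosh t * Real.exp (-(x/2) * Real.cosh t) := mul_comm _ _
      _ ≤ (2/(x/2)) * Real.exp (-((x/2)/2) * t) := cosh_mul_exp_le (by positivity) ht.le
      _ = (4/x) * Real.exp (-(x/4) * t) := by rw [show (2:ℝ)/(x/2) = 4/x by field_simp; ring, show ((x:ℝ)/2)/2 = x/4 by ring]
  · exact ((exp_neg_integrableOn_Ioi 0 (by positivity : (0:ℝ) < x/4)).const_mul _)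
  · filter_upwards with t y _
    have : HasDerivAt (fun y : ℝ => -y * Real.cosh t) (-Real.cosh t) y := by
      simpa using ((hasDerivAt_id y).neg.mul_const (Real.cosh t))
    simpa [mul_comm] using this.exp

/-- Matching of the integer-order solutions at the compartment boundary: with
`c_p(r) = σ/q − (σL/√q)·K₁(√q·L)·I₀(√q·r)` and `c_d(r) = (σL/√q)·I₁(√q·L)·K₀(√q·r)`,
one has `c_p(L) = c_d(L)` and `c_p'(L) = c_d'(L)`. -/
theorem matching_at_boundary (q L σ : ℝ) (hq : 0 < q) (hL : 0 < L)
    (cp cd : ℝ → ℝ)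
    (hcp : ∀ r, cp r =
      σ / q - (σ * L / Real.sqrt q) * K1 (Real.sqrt q * L) * I0 (Real.sqrt q * r))
    (hcd : ∀ r, cd r =
      (σ * L / Real.sqrt q) * I1 (Real.sqrt q * L) * K0 (Real.sqrt q * r)) :
    cp L = cd L ∧ deriv cp L = deriv cd L := by
  have hsq : 0 < Real.sqrt q := Real.sqrt_pos.2 hq
  set s := Real.sqrt q with hs
  have hsq2 : s * s = q := Real.mul_self_sqrt hq.le
  have ha : 0 < s * L := by positivity
  constructor
  · rw [hcp L, hcd L]
    have hw := wronskian ha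
    have key : σ * L / s * (1/(s*L)) = σ / q := by
      rw [← hsq2]; field_simp
    linear_combination (-(σ*L/s)) * hw - key
  · have hinner : ∀ r : ℝ, HasDerivAt (fun r : ℝ => s * r) s r := by
      intro r; simpa using (hasDerivAt_id r).const_mul s
    have hIcomp : HasDerivAt (fun r => I0 (s * r)) (I1 (s*L) * s) L :=
      (hasDerivAt_I0 (s*L)).comp L (hinner L)
    have hKcomp : HasDerivAt (fun r => K0 (s * r)) (-K1 (s*L) * s) L :=
      (hasDerivAt_K0 ha).comp L (hinner L)
    have hcp' : HasDerivAt cp (-((σ * L / s) * K1 (s*L) * (I1 (s*L) * s))) L := by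
      have : HasDerivAt (fun r => σ / q - (σ * L / s) * K1 (s*L) * I0 (s * r))
          (-((σ * L / s) * K1 (s*L) * (I1 (s*L) * s))) L := by
        simpa using ((hIcomp.const_mul ((σ * L / s) * K1 (s*L))).const_sub (σ/q))
      exact this.congr_of_eventuallyEq (by filter_upwards with r; rw [hcp r])
    have hcd' : HasDerivAt cd ((σ * L / s) * I1 (s*L) * (-K1 (s*L) * s)) L := by
      have : HasDerivAt (fun r => (σ * L / s) * I1 (s*L) * K0 (s * r))
          ((σ * L / s) * I1 (s*L) * (-K1 (s*L) * s)) L :=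
        hKcomp.const_mul _
      exact this.congr_of_eventuallyEq (by filter_upwards with r; rw [hcd r])
    rw [hcp'.deriv, hcd'.deriv]; ring
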